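/- The composition in Gen of two diagrams is a diagram when restricted appropriately: if R₁ : n → m and R₂ : m → k are arrows of Gen all of whose equivalence classes are two-element sets (diagrams), then every equivalence class of R₂ ∗ R₁ : n → k is also a two-element set. -/

import Mathlib

/-- `R` is an equivalence relation on the finite ordinal `N` (as a subset of ℕ). -/
def IsEquivOn (R : ℕ → ℕ → Prop) (N : ℕ) : Prop :=
  (∀ x y, R x y → x < N ∧ y < N) ∧ (∀ x, x < N → R x x) ∧
    (∀ x y, R x y → R y x) ∧ (∀ x y z, R x y → R y z → R x z)

/-- The relation `R⁺ᵏ`: shift `R` upwards by `k`. -/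
def shiftRel (R : ℕ → ℕ → Prop) (k : ℕ) : ℕ → ℕ → Prop :=
  fun x y => k ≤ x ∧ k ≤ y ∧ R (x - k) (y - k)

/-- Transitive closure of `R₁ ∪ R₂⁺ⁿ`. -/
def glueRel (n : ℕ) (R₁ R₂ : ℕ → ℕ → Prop) : ℕ → ℕ → Prop :=
  Relation.TransGen (fun a b => R₁ a b ∨ shiftRel R₂ n a b)

/-- Renumbering of the outer blocks `n ∪ kⁿ⁺ᵐ` into `n + k`. -/
def embOuter (n m : ℕ) (x : ℕ) : ℕ := if x < n then x else x + m

/-- Composition `R₂ ∗ R₁` in the category Gen: restrict the transitive closure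
of `R₁ ∪ R₂⁺ⁿ` to the outer blocks and renumber. -/
def genComp (n m k : ℕ) (R₂ R₁ : ℕ → ℕ → Prop) : ℕ → ℕ → Prop :=
  fun x y => x < n + k ∧ y < n + k ∧
    glueRel n R₁ R₂ (embOuter n m x) (embOuter n m y)

/-- The identity arrow `1ₙ` of Gen: `x` and `y` are related iff `x ≡ y (mod n)`. -/
def genId (n : ℕ) : ℕ → ℕ → Prop :=
  fun x y => x < n + n ∧ y < n + n ∧ x % n = y % n

/-- Every equivalence class of `R` on `N` is a two-element set
(`R` is a diagram). -/
def TwoElementClasses (R : ℕ → ℕ → Prop) (N : ℕ) : Prop :=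
  ∀ x, x < N → ∃ y, y ≠ x ∧ R x y ∧ ∀ z, R x z → z = x ∨ z = y

namespace GenAux

def stepFn (f g : ℕ → ℕ) : ℕ × ℕ → ℕ × ℕ :=
  fun cp => (if f cp.1 = cp.2 then g cp.1 else f cp.1, cp.1)

def walk (f g : ℕ → ℕ) (x t : ℕ) : ℕ := ((stepFn f g)^[t] (x, x)).1

lemma walk_zero (f g : ℕ → ℕ) (x : ℕ) : walk f g x 0 = x := rfl

lemma walk_snd (f g : ℕ → ℕ) (x t : ℕ) :
    ((stepFn f g)^[t] (x, x)).2 = walk f g x (t - 1) := by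
  cases t with
  | zero => rfl
  | succ t => rw [Function.iterate_succ_apply']; rfl

lemma walk_succ (f g : ℕ → ℕ) (x t : ℕ) :
    walk f g x (t+1) =
      if f (walk f g x t) = walk f g x (t-1) then g (walk f g x t)
      else f (walk f g x t) := by
  have h := walk_snd f g x t
  unfold walk
  rw [Function.iterate_succ_apply',
    show ∀ p : ℕ × ℕ, stepFn f g p = (if f p.1 = p.2 then g p.1 else f p.1, p.1) from
      fun _ => rfl]
  rw [show ((stepFn f g)^[t] (x,x)).2 = ((stepFn f g)^[t-1] (x,x)).1 from h]

lemma walk_edge (f g : ℕ → ℕ) (x t : ℕ) :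
    walk f g x (t+1) = f (walk f g x t) ∨ walk f g x (t+1) = g (walk f g x t) := by
  rw [walk_succ]; split
  · right; rfl
  · left; rfl

/-- Hypothesis pack: `f` is a fixed-point-free involution of `[0, n+m)`,
identity elsewhere; `g` likewise on `[n, n+m+k)`. -/
def Pack (n m k : ℕ) (f g : ℕ → ℕ) : Prop :=
  (∀ x, x < n + m → f x < n + m ∧ f x ≠ x ∧ f (f x) = x) ∧
  (∀ x, ¬ x < n + m → f x = x) ∧
  (∀ x, n ≤ x → x < n + m + k → (n ≤ g x ∧ g x < n + m + k) ∧ g x ≠ x ∧ g (g x) = x) ∧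
  (∀ x, ¬ (n ≤ x ∧ x < n + m + k) → g x = x)

variable {n m k : ℕ} {f g : ℕ → ℕ}

lemma walk_first (hp : Pack n m k f g) (x : ℕ)
    (hx : x < n ∨ (n + m ≤ x ∧ x < n + m + k)) :
    (x < n ∧ walk f g x 1 = f x) ∨ ((n + m ≤ x ∧ x < n + m + k) ∧ walk f g x 1 = g x) := by
  obtain ⟨hf1, hf2, hg1, hg2⟩ := hp
  have e : walk f g x 1 = if f x = x then g x else f x := by
    have e := walk_succ f g x 0
    rwa [show (0:ℕ)-1 = 0 from rfl, walk_zero] at e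
  rcases hx with hxl | hxr
  · exact Or.inl ⟨hxl, by rw [e, if_neg (hf1 x (by omega)).2.1]⟩
  · exact Or.inr ⟨hxr, by rw [e, if_pos (hf2 x (by omega))]⟩

lemma walk_one_ne (hp : Pack n m k f g) (x : ℕ)
    (hx : x < n ∨ (n + m ≤ x ∧ x < n + m + k)) : walk f g x 1 ≠ x := by
  rcases walk_first hp x hx with ⟨h1, h2⟩ | ⟨h1, h2⟩
  · rw [h2]; exact (hp.1 x (by omega)).2.1
  · rw [h2]; exact (hp.2.2.1 x (by omega) (by omega)).2.1

/-- Inverting one step of the walk: the previous node is a partner of the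
current (middle) node. -/
lemma walk_back (hp : Pack n m k f g) (x : ℕ)
    (hx : x < n ∨ (n + m ≤ x ∧ x < n + m + k)) (t : ℕ) (ht : 1 ≤ t)
    (hmt : n ≤ walk f g x t ∧ walk f g x t < n + m)
    (hprev : t = 1 ∨ (n ≤ walk f g x (t-1) ∧ walk f g x (t-1) < n + m)) :
    walk f g x (t-1) = f (walk f g x t) ∨ walk f g x (t-1) = g (walk f g x t) := by
  obtain ⟨hf1, hf2, hg1, hg2⟩ := hp
  have e := walk_edge f g x (t-1)
  rw [Nat.sub_add_cancel ht] at e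
  rcases hprev with h1 | hmid
  · subst h1
    simp only [Nat.sub_self, walk_zero] at e ⊢
    rcases hx with hxl | hxr
    · rcases e with h | h
      · left; rw [h]; exact ((hf1 x (by omega)).2.2).symm
      · exfalso
        have := hg2 x (by omega)
        rw [this] at h
        omega
    · rcases e with h | h
      · exfalso
        have := hf2 x (by omega)
        rw [this] at h
        omega
      · right; rw [h]; exact ((hg1 x (by omega) (by omega)).2.2).symm
  · rcases e with h | h
    · left; rw [h]; exact ((hf1 _ (by omega)).2.2).symm
    · right; rw [h]; exact ((hg1 _ (by omega) (by omega)).2.2).symm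

lemma walk_nodup (hp : Pack n m k f g) (x : ℕ)
    (hx : x < n ∨ (n + m ≤ x ∧ x < n + m + k)) :
    ∀ j, (∀ t, 1 ≤ t → t < j → n ≤ walk f g x t ∧ walk f g x t < n + m) →
      ∀ i, i < j → walk f g x i ≠ walk f g x j := by
  obtain ⟨hf1, hf2, hg1, hg2⟩ := hp
  have hp' : Pack n m k f g := ⟨hf1, hf2, hg1, hg2⟩
  intro j
  induction j using Nat.strong_induction_on with
  | _ j IH =>
  intro Hj i hij hEq
  by_cases hji : j = i + 1
  · subst hji
    have he := walk_edge f g x i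
    by_cases hi0 : i = 0
    · subst hi0
      exact walk_one_ne hp' x hx (hEq.symm.trans (walk_zero f g x))
    · have hmi := Hj i (by omega) (by omega)
      rcases he with h | h
      · rw [← hEq] at h
        exact (hf1 _ (by omega)).2.1 h.symm
      · rw [← hEq] at h
        exact (hg1 _ (by omega) (by omega)).2.1 h.symm
  · have hji2 : i + 2 ≤ j := by omega
    by_cases hi0 : i = 0
    · subst hi0
      rw [walk_zero] at hEq
      have hmj1 := Hj (j-1) (by omega) (by omega)
      have he : walk f g x j = f (walk f g x (j-1)) ∨
          walk f g x j = g (walk f g x (j-1)) := by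
        have := walk_edge f g x (j-1)
        rwa [Nat.sub_add_cancel (by omega)] at this
      rcases hx with hxl | hxr
      · rcases he with h | h
        · -- last edge was f; so walk (j-1) = f x = walk 1
          have ha1 : walk f g x 1 = f x := by
            rcases walk_first hp' x (Or.inl hxl) with ⟨_, h2⟩ | ⟨h1, _⟩
            · exact h2
            · omega
          have hj1 : walk f g x (j-1) = walk f g x 1 := by
            rw [ha1]
            have : f (walk f g x j) = walk f g x (j-1) := by
              rw [h]; exact (hf1 _ (by omega)).2.2
            rw [← hEq] at this
            exact this.symm
          by_cases hj3 : j - 1 = 1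
          · -- j = 2 : compute walk 2
            have hj2' : j = 2 := by omega
            subst hj2'
            have hm1 := Hj 1 le_rfl (by omega)
            have e2 : walk f g x 2 = g (walk f g x 1) := by
              have e2 := walk_succ f g x 1
              rw [show (1:ℕ)-1 = 0 from rfl, walk_zero] at e2
              rw [e2, if_pos]
              rw [ha1]
              exact (hf1 x (by omega)).2.2
            have := (hg1 (walk f g x 1) (by omega) (by omega)).1.1
            omega
          · exact IH (j-1) (by omega) (fun t h1 h2 => Hj t h1 (by omega)) 1
              (by omega) hj1.symm
        · have := (hg1 (walk f g x (j-1)) (by omega) (by omega)).1.1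
          omega
      · rcases he with h | h
        · have := (hf1 (walk f g x (j-1)) (by omega)).1
          omega
        · have ha1 : walk f g x 1 = g x := by
            rcases walk_first hp' x (Or.inr hxr) with ⟨h1, _⟩ | ⟨_, h2⟩
            · omega
            · exact h2
          have hj1 : walk f g x (j-1) = walk f g x 1 := by
            rw [ha1]
            have : g (walk f g x j) = walk f g x (j-1) := by
              rw [h]; exact (hg1 _ (by omega) (by omega)).2.2
            rw [← hEq] at this
            exact this.symm
          by_cases hj3 : j - 1 = 1
          · have hj2' : j = 2 := by omega
            subst hj2'
            have hm1 := Hj 1 le_rfl (by omega)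
            have hlt := (hf1 (walk f g x 1) (by omega)).1
            have e2 : walk f g x 2 = f (walk f g x 1) := by
              have e2 := walk_succ f g x 1
              rw [show (1:ℕ)-1 = 0 from rfl, walk_zero] at e2
              rw [e2, if_neg]
              omega
            omega
          · exact IH (j-1) (by omega) (fun t h1 h2 => Hj t h1 (by omega)) 1
              (by omega) hj1.symm
    · -- 1 ≤ i
      have hi1 : 1 ≤ i := by omega
      have hmi := Hj i hi1 (by omega)
      have hmj : n ≤ walk f g x j ∧ walk f g x j < n + m := by rw [← hEq]; exact hmi
      have hmj1 := Hj (j-1) (by omega) (by omega)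
      have hbi : walk f g x (i-1) = f (walk f g x i) ∨
          walk f g x (i-1) = g (walk f g x i) := by
        refine walk_back hp' x hx i hi1 hmi ?_
        by_cases h1 : i = 1
        · exact Or.inl h1
        · exact Or.inr (Hj (i-1) (by omega) (by omega))
      have hbj : walk f g x (j-1) = f (walk f g x i) ∨
          walk f g x (j-1) = g (walk f g x i) := by
        have := walk_back hp' x hx j (by omega) hmj (Or.inr hmj1)
        rwa [← hEq] at this
      by_cases hne : walk f g x (i-1) = walk f g x (j-1)
      · exact IH (j-1) (by omega) (fun t h1 h2 => Hj t h1 (by omega)) (i-1)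
          (by omega) hne
      · have hfg : f (walk f g x i) ≠ g (walk f g x i) := by
          intro hfgeq
          rcases hbi with h | h <;> rcases hbj with h' | h' <;>
            apply hne <;> rw [h, h'] <;> rw [hfgeq]
        have hstep := walk_succ f g x i
        have hij1 : walk f g x (i+1) = walk f g x (j-1) := by
          rcases hbi with h | h
          · rw [if_pos h.symm] at hstep
            rcases hbj with h' | h'
            · exact absurd (h.trans h'.symm) hne
            · rw [hstep, ← h']
          · have hne2 : f (walk f g x i) ≠ walk f g x (i-1) := by
              intro e; exact hfg (by rw [e, h])
            rw [if_neg hne2] at hstep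
            rcases hbj with h' | h'
            · rw [hstep, ← h']
            · exact absurd (h.trans h'.symm) hne
        by_cases hj1 : i + 1 = j - 1
        · have hj2 : j = i + 2 := by omega
          have hdm : n ≤ walk f g x (i+1) ∧ walk f g x (i+1) < n + m := by
            rw [hij1]; exact hmj1
          have hstep2 := walk_succ f g x (i+1)
          rw [show i + 1 - 1 = i from by omega, show i + 1 + 1 = j from by omega] at hstep2
          by_cases hc : f (walk f g x (i+1)) = walk f g x i
          · rw [if_pos hc] at hstep2
            have h1 : g (walk f g x (i+1)) = walk f g x i := by rw [← hstep2, ← hEq]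
            have e1 : f (walk f g x i) = walk f g x (i+1) := by
              rw [← hc]; exact (hf1 _ (by omega)).2.2
            have e2 : g (walk f g x i) = walk f g x (i+1) := by
              rw [← h1]; exact (hg1 _ (by omega) (by omega)).2.2
            exact hfg (e1.trans e2.symm)
          · rw [if_neg hc] at hstep2
            exact hc (by rw [← hstep2, ← hEq])
        · exact IH (j-1) (by omega) (fun t h1 h2 => Hj t h1 (by omega)) (i+1)
            (by omega) hij1

/-- The core combinatorial lemma: from any outer point `x`, the alternating
walk reaches a unique other outer point `e`, and the whole `Esup`-component of
`x` meets the outer set exactly in `{x, e}`. -/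
lemma walk_main (hp : Pack n m k f g) (x : ℕ)
    (hx : x < n ∨ (n + m ≤ x ∧ x < n + m + k)) :
    ∃ e, (e < n ∨ (n + m ≤ e ∧ e < n + m + k)) ∧ e ≠ x ∧
      Relation.TransGen
        (fun a b => (a < n + m ∧ b = f a) ∨ (n ≤ a ∧ a < n + m + k ∧ b = g a)) x e ∧
      ∀ z, Relation.TransGen
          (fun a b => (a < n + m ∧ (b = a ∨ b = f a)) ∨
            (n ≤ a ∧ a < n + m + k ∧ (b = a ∨ b = g a))) x z →
        (z < n ∨ n + m ≤ z) → z = x ∨ z = e := by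
  classical
  obtain ⟨hf1, hf2, hg1, hg2⟩ := hp
  have hp' : Pack n m k f g := ⟨hf1, hf2, hg1, hg2⟩
  -- the walk must exit the middle block
  have hexit : ∃ t, 1 ≤ t ∧ ¬ (n ≤ walk f g x t ∧ walk f g x t < n + m) := by
    by_contra hall
    push_neg at hall
    have hall' : ∀ t, 1 ≤ t → n ≤ walk f g x t ∧ walk f g x t < n + m :=
      fun t ht => hall t ht
    have hmaps : ∀ t ∈ Finset.Icc 1 (m+1), walk f g x t ∈ Finset.Ico n (n+m) := by
      intro t ht
      rw [Finset.mem_Icc] at ht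
      rw [Finset.mem_Ico]
      exact hall' t ht.1
    have hinj : Set.InjOn (walk f g x) (Finset.Icc 1 (m+1)) := by
      intro i hi j hj hijeq
      by_contra hne
      rcases Nat.lt_or_ge i j with h | h
      · exact walk_nodup hp' x hx j (fun t h1 h2 => hall' t h1) i h hijeq
      · have h' : j < i := by omega
        exact walk_nodup hp' x hx i (fun t h1 h2 => hall' t h1) j h' hijeq.symm
    have hcard := Finset.card_le_card_of_injOn (walk f g x) hmaps hinj
    rw [Nat.card_Icc, Nat.card_Ico] at hcard
    omega
  set L := Nat.find hexit with hLdef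
  have hLspec := Nat.find_spec hexit
  have hL1 : 1 ≤ L := hLspec.1
  have hLout : ¬ (n ≤ walk f g x L ∧ walk f g x L < n + m) := hLspec.2
  have hHL : ∀ t, 1 ≤ t → t < L → n ≤ walk f g x t ∧ walk f g x t < n + m := by
    intro t h1 h2
    by_contra hmid
    exact Nat.find_min hexit h2 ⟨h1, hmid⟩
  have hnodup := walk_nodup hp' x hx L hHL
  have hnex : walk f g x L ≠ x := by
    intro h
    exact hnodup 0 (by omega) (by rw [walk_zero, h])
  -- last edge analysis
  have hlast : walk f g x L = f (walk f g x (L-1)) ∨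
      walk f g x L = g (walk f g x (L-1)) := by
    have := walk_edge f g x (L-1)
    rwa [Nat.sub_add_cancel hL1] at this
  have hout : (walk f g x L < n ∧ f (walk f g x L) = walk f g x (L-1)) ∨
      ((n + m ≤ walk f g x L ∧ walk f g x L < n + m + k) ∧
        g (walk f g x L) = walk f g x (L-1)) := by
    have hprev : (L = 1 ∧ walk f g x (L-1) = x) ∨
        (n ≤ walk f g x (L-1) ∧ walk f g x (L-1) < n + m) := by
      by_cases h1 : L = 1
      · left; exact ⟨h1, by rw [h1]; exact walk_zero f g x⟩
      · right; exact hHL (L-1) (by omega) (by omega)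
    rcases hlast with h | h
    · -- last edge by f
      have hu : walk f g x (L-1) < n + m := by
        rcases hprev with ⟨h1, h2⟩ | hm
        · rcases hx with hxl | hxr
          · omega
          · exfalso
            rw [h2, hf2 x (by omega)] at h
            exact hnex h
        · omega
      have hbd := (hf1 _ hu).1
      left
      refine ⟨by omega, ?_⟩
      rw [h]
      exact (hf1 _ hu).2.2
    · -- last edge by g
      have hu : n ≤ walk f g x (L-1) ∧ walk f g x (L-1) < n + m + k := by
        rcases hprev with ⟨h1, h2⟩ | hm
        · rcases hx with hxl | hxr
          · exfalso
            rw [h2, hg2 x (by omega)] at h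
            exact hnex h
          · omega
        · omega
      have hbd := (hg1 _ hu.1 hu.2).1
      right
      refine ⟨by omega, ?_⟩
      rw [h]
      exact (hg1 _ hu.1 hu.2).2.2
  refine ⟨walk f g x L, ?_, hnex, ?_, ?_⟩
  · rcases hout with ⟨h1, _⟩ | ⟨h1, _⟩
    · exact Or.inl h1
    · exact Or.inr h1
  · -- existence of the chain
    have hchain : ∀ t, 1 ≤ t → t ≤ L → Relation.TransGen
        (fun u v => (u < n + m ∧ v = f u) ∨ (n ≤ u ∧ u < n + m + k ∧ v = g u))
        x (walk f g x t) := by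
      intro t
      induction t with
      | zero => omega
      | succ t ih =>
        intro h1 h2
        have hstep : (walk f g x t < n + m ∧ walk f g x (t+1) = f (walk f g x t)) ∨
            (n ≤ walk f g x t ∧ walk f g x t < n + m + k ∧
              walk f g x (t+1) = g (walk f g x t)) := by
          by_cases ht0 : t = 0
          · subst ht0
            rw [walk_zero]
            rcases walk_first hp' x hx with ⟨hc, he⟩ | ⟨hc, he⟩
            · exact Or.inl ⟨by omega, he⟩
            · exact Or.inr ⟨by omega, by omega, he⟩
          · have hm := hHL t (by omega) (by omega)
            rcases walk_edge f g x t with he | he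
            · exact Or.inl ⟨by omega, he⟩
            · exact Or.inr ⟨by omega, by omega, he⟩
        have hstep' : (fun u v => (u < n + m ∧ v = f u) ∨
            (n ≤ u ∧ u < n + m + k ∧ v = g u)) (walk f g x t) (walk f g x (t+1)) := by
          rcases hstep with ⟨h3, h4⟩ | ⟨h3, h4, h5⟩
          · exact Or.inl ⟨h3, h4⟩
          · exact Or.inr ⟨h3, h4, h5⟩
        by_cases ht0 : t = 0
        · subst ht0
          exact Relation.TransGen.single hstep'
        · exact Relation.TransGen.tail (ih (by omega) (by omega)) hstep'
    exact hchain L hL1 le_rfl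
  · -- uniqueness
    have hclosed : ∀ u v, (∃ t, t ≤ L ∧ walk f g x t = u) →
        ((u < n + m ∧ (v = u ∨ v = f u)) ∨
          (n ≤ u ∧ u < n + m + k ∧ (v = u ∨ v = g u))) →
        (∃ t, t ≤ L ∧ walk f g x t = v) := by
      rintro u v ⟨t, htL, rfl⟩ hE
      rcases hE with ⟨hu, hv⟩ | ⟨hu1, hu2, hv⟩
      · rcases hv with rfl | rfl
        · exact ⟨t, htL, rfl⟩
        · -- v = f (walk t)
          by_cases ht0 : t = 0
          · subst ht0
            rw [walk_zero] at hu ⊢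
            rcases walk_first hp' x hx with ⟨hc, he⟩ | ⟨hc, he⟩
            · exact ⟨1, hL1, he⟩
            · omega
          · by_cases htL' : t = L
            · subst htL'
              rcases hout with ⟨h1, h2⟩ | ⟨h1, h2⟩
              · exact ⟨L-1, by omega, h2.symm⟩
              · omega
            · have hm := hHL t (by omega) (by omega)
              have hstep := walk_succ f g x t
              by_cases hc : f (walk f g x t) = walk f g x (t-1)
              · exact ⟨t-1, by omega, hc.symm⟩
              · rw [if_neg hc] at hstep
                exact ⟨t+1, by omega, hstep⟩
      · rcases hv with rfl | rfl
        · exact ⟨t, htL, rfl⟩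
        · -- v = g (walk t)
          by_cases ht0 : t = 0
          · subst ht0
            rw [walk_zero] at hu1 hu2 ⊢
            rcases walk_first hp' x hx with ⟨hc, he⟩ | ⟨hc, he⟩
            · omega
            · exact ⟨1, hL1, he⟩
          · by_cases htL' : t = L
            · subst htL'
              rcases hout with ⟨h1, h2⟩ | ⟨h1, h2⟩
              · omega
              · exact ⟨L-1, by omega, h2.symm⟩
            · have hm := hHL t (by omega) (by omega)
              have hstep := walk_succ f g x t
              by_cases hc : f (walk f g x t) = walk f g x (t-1)
              · rw [if_pos hc] at hstep
                exact ⟨t+1, by omega, hstep⟩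
              · have hb : walk f g x (t-1) = f (walk f g x t) ∨
                    walk f g x (t-1) = g (walk f g x t) := by
                  refine walk_back hp' x hx t (by omega) hm ?_
                  by_cases h1 : t = 1
                  · exact Or.inl h1
                  · exact Or.inr (hHL (t-1) (by omega) (by omega))
                rcases hb with hb | hb
                · exact absurd hb.symm hc
                · exact ⟨t-1, by omega, hb⟩
    have hzS : ∀ z, Relation.TransGen
        (fun a b => (a < n + m ∧ (b = a ∨ b = f a)) ∨
          (n ≤ a ∧ a < n + m + k ∧ (b = a ∨ b = g a))) x z →
        ∃ t, t ≤ L ∧ walk f g x t = z := by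
      intro z hz
      induction hz with
      | single h => exact hclosed _ _ ⟨0, by omega, walk_zero f g x⟩ h
      | tail _ h ih => exact hclosed _ _ ih h
    intro z hz hzout
    obtain ⟨t, htL, rfl⟩ := hzS z hz
    by_cases ht0 : t = 0
    · subst ht0; exact Or.inl (walk_zero f g x)
    · by_cases htL' : t = L
      · subst htL'; exact Or.inr rfl
      · have hm := hHL t (by omega) (by omega)
        omega

end GenAux

/-- The composition in Gen of two diagrams is a diagram: all classes of
`R₂ ∗ R₁` are two-element sets. -/
theorem genComp_of_diagrams (n m k : ℕ) (R₁ R₂ : ℕ → ℕ → Prop)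
    (h₁ : IsEquivOn R₁ (n + m)) (h₂ : IsEquivOn R₂ (m + k))
    (d₁ : TwoElementClasses R₁ (n + m)) (d₂ : TwoElementClasses R₂ (m + k)) :
    TwoElementClasses (genComp n m k R₂ R₁) (n + k) := by
  classical
  obtain ⟨hb₁, hr₁, hs₁, ht₁⟩ := h₁
  obtain ⟨hb₂, hr₂, hs₂, ht₂⟩ := h₂
  -- the partner function of `R₁`
  set f : ℕ → ℕ := fun u => if h : u < n + m then (d₁ u h).choose else u with hfdef
  have hfspec : ∀ u (h : u < n + m), f u ≠ u ∧ R₁ u (f u) ∧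
      ∀ z, R₁ u z → z = u ∨ z = f u := by
    intro u h
    have hspec := (d₁ u h).choose_spec
    simp only [hfdef, dif_pos h]
    exact hspec
  have hfid : ∀ u, ¬ u < n + m → f u = u := by
    intro u h; simp only [hfdef, dif_neg h]
  -- the (shifted) partner function of `R₂`
  set g : ℕ → ℕ := fun u => if h : n ≤ u ∧ u < n + m + k then
      n + (d₂ (u - n) (by omega)).choose else u with hgdef
  have hgid : ∀ u, ¬ (n ≤ u ∧ u < n + m + k) → g u = u := by
    intro u h; simp only [hgdef, dif_neg h]
  have hg2spec : ∀ u (h : n ≤ u ∧ u < n + m + k), g u ≠ u ∧ shiftRel R₂ n u (g u) ∧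
      ∀ z, shiftRel R₂ n u z → z = u ∨ z = g u := by
    intro u h
    have h' : u - n < m + k := by omega
    obtain ⟨hne, hrel, huniq⟩ := (d₂ (u - n) h').choose_spec
    have hgu : g u = n + (d₂ (u - n) h').choose := by simp only [hgdef, dif_pos h]
    have hyb : (d₂ (u - n) h').choose < m + k := (hb₂ _ _ hrel).2
    refine ⟨?_, ⟨h.1, by omega, ?_⟩, ?_⟩
    · rw [hgu]; intro e; apply hne; omega
    · rw [hgu, Nat.add_sub_cancel_left]
      exact hrel
    · rintro z ⟨hz1, hz2, hz3⟩
      rcases huniq _ hz3 with hh | hh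
      · left; omega
      · right; rw [hgu]; omega
  -- the `Pack` hypotheses
  have hf1 : ∀ u, u < n + m → f u < n + m ∧ f u ≠ u ∧ f (f u) = u := by
    intro u hu
    obtain ⟨hne, hrel, huniq⟩ := hfspec u hu
    have hbnd : f u < n + m := (hb₁ _ _ hrel).2
    refine ⟨hbnd, hne, ?_⟩
    obtain ⟨hne', hrel', huniq'⟩ := hfspec (f u) hbnd
    rcases huniq' u (hs₁ _ _ hrel) with hh | hh
    · exact absurd hh.symm hne
    · exact hh.symm
  have hg1 : ∀ u, n ≤ u → u < n + m + k →
      (n ≤ g u ∧ g u < n + m + k) ∧ g u ≠ u ∧ g (g u) = u := by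
    intro u h1 h2
    obtain ⟨hne, hrel, huniq⟩ := hg2spec u ⟨h1, h2⟩
    have hbnd : n ≤ g u ∧ g u < n + m + k := by
      obtain ⟨a1, a2, a3⟩ := hrel
      have := (hb₂ _ _ a3).2
      omega
    refine ⟨hbnd, hne, ?_⟩
    obtain ⟨hne', hrel', huniq'⟩ := hg2spec (g u) ⟨hbnd.1, hbnd.2⟩
    have hsym : shiftRel R₂ n (g u) u := ⟨hbnd.1, h1, hs₂ _ _ hrel.2.2⟩
    rcases huniq' u hsym with hh | hh
    · exact absurd hh.symm hne
    · exact hh.symm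
  have hpack : GenAux.Pack n m k f g := ⟨hf1, hfid, hg1, hgid⟩
  -- sandwiching the edge relation
  have hsub : ∀ a b, ((a < n + m ∧ b = f a) ∨ (n ≤ a ∧ a < n + m + k ∧ b = g a)) →
      (R₁ a b ∨ shiftRel R₂ n a b) := by
    rintro a b (⟨h1, rfl⟩ | ⟨h1, h2, rfl⟩)
    · exact Or.inl (hfspec a h1).2.1
    · exact Or.inr (hg2spec a ⟨h1, h2⟩).2.1
  have hsup : ∀ a b, (R₁ a b ∨ shiftRel R₂ n a b) →
      ((a < n + m ∧ (b = a ∨ b = f a)) ∨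
        (n ≤ a ∧ a < n + m + k ∧ (b = a ∨ b = g a))) := by
    rintro a b (h | h)
    · have hbd := hb₁ _ _ h
      exact Or.inl ⟨hbd.1, (hfspec a hbd.1).2.2 b h⟩
    · obtain ⟨h1, h2, h3⟩ := h
      have hbd := hb₂ _ _ h3
      exact Or.inr ⟨h1, by omega, (hg2spec a ⟨h1, by omega⟩).2.2 b ⟨h1, h2, h3⟩⟩
  -- main argument
  intro x hx
  have hX : embOuter n m x < n ∨
      (n + m ≤ embOuter n m x ∧ embOuter n m x < n + m + k) := by
    unfold embOuter; split <;> omega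
  obtain ⟨e, heout, hene, hchain, huniq⟩ := GenAux.walk_main hpack (embOuter n m x) hX
  set y := if e < n then e else e - m with hydef
  have hey : embOuter n m y = e := by
    by_cases h : e < n
    · simp [hydef, embOuter, h]
    · have he' : n + m ≤ e ∧ e < n + m + k := by
        rcases heout with h' | h'
        · omega
        · exact h'
      have h2 : ¬ (e - m < n) := by omega
      simp only [hydef, embOuter, if_neg h, if_neg h2]
      omega
  have hy : y < n + k := by
    by_cases h : e < n
    · simp only [hydef, if_pos h]; omega
    · simp only [hydef, if_neg h]
      rcases heout with h' | h' <;> omega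
  have hinj : ∀ a b : ℕ, embOuter n m a = embOuter n m b → a = b := by
    intro a b
    unfold embOuter
    split <;> split <;> omega
  refine ⟨y, ?_, ⟨hx, hy, ?_⟩, ?_⟩
  · intro hxy
    exact hene (by rw [← hey, hxy])
  · rw [hey]
    exact Relation.TransGen.mono hsub _ _ hchain
  · rintro z ⟨hz1, hz2, hz3⟩
    have hzout : embOuter n m z < n ∨ n + m ≤ embOuter n m z := by
      unfold embOuter; split <;> omega
    rcases huniq (embOuter n m z) (Relation.TransGen.mono hsup _ _ hz3) hzout with h | h
    · left; exact hinj _ _ h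
    · right; apply hinj; rw [h, hey]
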